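/- Suppose there is a deterministic semantic-incremental m-way branching program of size s computing GEN(m) correctly on all instances T^I arising from the reduction (over all DE^G_k inputs I), where G has in-degree at most 2, n ≥ 2 nodes, and m = 3kn+n+1. Then there is a deterministic thrifty k-way branching program of size at most s solving DE^G_k. -/

import Mathlib

/-- A deterministic `k`-way branching program with variables `Var` and outputs `Out`.
States are either query states (labeled by `query`, with `k` out-edges given by `next`)
or output states (where `out` is `some o`). -/
structure BP (Var : Type) (k : ℕ) (Out : Type) where
  State : Type
  [finState : Fintype State]
  start : State
  query : State → Var
  next : State → Fin k → State
  out : State → Option Out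

namespace BP

variable {Var Out : Type} {k : ℕ}

/-- The number of states. -/
noncomputable def size (B : BP Var k Out) : ℕ := @Fintype.card B.State B.finState

/-- The computation path of input `I`. -/
def path (B : BP Var k Out) (I : Var → Fin k) : ℕ → B.State
  | 0 => B.start
  | t + 1 => B.next (B.path I t) (I (B.query (B.path I t)))

/-- The computation of `I` is still running at time `t`: no output state was reached earlier. -/
def VisitsAt (B : BP Var k Out) (I : Var → Fin k) (t : ℕ) : Prop :=
  ∀ s < t, B.out (B.path I s) = none

/-- State `q` is on the computation path of input `I`. -/
def Visits (B : BP Var k Out) (I : Var → Fin k) (q : B.State) : Prop :=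
  ∃ t, B.VisitsAt I t ∧ B.path I t = q

/-- `B` computes the function `g`. -/
def Computes (B : BP Var k Out) (g : (Var → Fin k) → Out) : Prop :=
  ∀ I, ∃ t, B.VisitsAt I t ∧ B.out (B.path I t) = some (g I)

end BP

/-- A rooted dag in which every internal node has an ordered pair of children (left, right).
`children u = none` means `u` is a leaf; the root is the unique node that is nobody's child. -/
structure BinDag where
  n : ℕ
  children : Fin n → Option (Fin n × Fin n)
  wf : WellFounded fun v u : Fin n => ∃ c, children u = some c ∧ (v = c.1 ∨ v = c.2)
  root : Fin n
  root_no_parent : ∀ u c, children u = some c → c.1 ≠ root ∧ c.2 ≠ root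
  root_unique : ∀ u, u ≠ root → ∃ p c, children p = some c ∧ (u = c.1 ∨ u = c.2)

namespace BinDag

/-- The child relation: `v` is a child of `u`. -/
def childRel (G : BinDag) : Fin G.n → Fin G.n → Prop :=
  fun v u => ∃ c, G.children u = some c ∧ (v = c.1 ∨ v = c.2)

/-- The `DE^G_k` variables for a binary dag: a leaf variable `l_u` for each leaf `u`, and a
variable `f_u(b₁, b₂)` for each internal node `u` and `b₁, b₂ ∈ [k]`. -/
def Var (G : BinDag) (k : ℕ) : Type :=
  {u : Fin G.n // G.children u = none} ⊕
    (Σ _u : {u : Fin G.n // (G.children u).isSome}, Fin k × Fin k)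

/-- The value of each node under input `I`: leaves take their `l` value, and an internal node
applies its function to the values of its two children. -/
noncomputable def val (G : BinDag) {k : ℕ} (I : G.Var k → Fin k) : Fin G.n → Fin k :=
  WellFounded.fix (C := fun _ => Fin k) G.wf fun u ih =>
    match h : G.children u with
    | none => I (Sum.inl ⟨u, h⟩)
    | some c => I (Sum.inr ⟨⟨u, by rw [h]; rfl⟩,
        (ih c.1 ⟨c, h, Or.inl rfl⟩, ih c.2 ⟨c, h, Or.inr rfl⟩)⟩)

/-- `B` solves `DE^G_k` for a binary dag `G`: on every input it halts and outputs `true` iff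
the value of the root is `1` (the first element of `[k]`). -/
def SolvesDE (G : BinDag) {k : ℕ} (hk : 0 < k) (B : BP (G.Var k) k Bool) : Prop :=
  ∀ I : G.Var k → Fin k, ∃ t, B.VisitsAt I t ∧
    B.out (B.path I t) = some (decide (G.val I G.root = ⟨0, hk⟩))

/-- `B` is thrifty: whenever a state querying `f_u(b₁, b₂)` is visited by input `I`, then
`(b₁, b₂)` is exactly the pair of values of the children of `u` under `I`. -/
def Thrifty (G : BinDag) {k : ℕ} (B : BP (G.Var k) k Bool) : Prop :=
  ∀ (I : G.Var k → Fin k) (q : B.State) (u : {u : Fin G.n // (G.children u).isSome})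
    (b : Fin k × Fin k), B.Visits I q → B.query q = Sum.inr ⟨u, b⟩ →
    ∀ c, G.children u.1 = some c → b.1 = G.val I c.1 ∧ b.2 = G.val I c.2

end BinDag

/-- The closure of `{1}` under the binary operation `T` on `[m]` (element `j ∈ [m]` is
represented by the index `j - 1 : Fin m`, so `1` is index `0`). -/
inductive Generated {m : ℕ} (T : Fin m → Fin m → Fin m) : Fin m → Prop
  | one (h : 0 < m) : Generated T ⟨0, h⟩
  | app {x y : Fin m} : Generated T x → Generated T y → Generated T (T x y)

/-- `B` solves `GEN(m)`: on every instance `T : [m]×[m] → [m]` it halts and outputs `true`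
iff `m` (index `m - 1`) is in the closure of `{1}` under `T`. -/
def SolvesGEN {m : ℕ} (hm : 0 < m) (B : BP (Fin m × Fin m) m Bool) : Prop :=
  ∀ T : Fin m × Fin m → Fin m, ∃ t b, B.VisitsAt T t ∧ B.out (B.path T t) = some b ∧
    (b = true ↔ Generated (fun x y => T (x, y)) ⟨m - 1, Nat.sub_lt hm one_pos⟩)

/-- `B` is semantic-incremental: for every state `q` querying variable `(x, y)` and every
input `T` whose computation path visits `q`, each of `x`, `y` is either `1` (index `0`) or
labels an earlier edge on `T`'s computation path (edge labels are the answers to the queries). -/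
def SemIncr {m : ℕ} (B : BP (Fin m × Fin m) m Bool) : Prop :=
  ∀ (T : Fin m × Fin m → Fin m) (t : ℕ), B.VisitsAt T t → B.out (B.path T t) = none →
    ∀ z ∈ ({(B.query (B.path T t)).1, (B.query (B.path T t)).2} : Set (Fin m)),
      (z : ℕ) = 0 ∨ ∃ s < t, T (B.query (B.path T s)) = z

/-- The static data of the reduction from `DE^G_k` to `GEN(m)`, `m = 3kn + n + 1`.
Element `j ∈ [m]` is represented by the index `j - 1 : Fin m` (so `1` is index `0`); node
`u : Fin n` (i.e., node `u+1 ∈ [n]`) is the element with index `u`.  The leaves are listed in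
a fixed order `w 0, …, w (l-1)`.  The elements `{n+2, …, m}` (indices `≥ n+1`) are injectively
assigned names `gN u a` ("node `u` has value `a`") and `gA u s a` ("value `a` flows along the
left (`s = false`) or right (`s = true`) in-arc of `u`"), with `gN root 1 = m` (index `m-1`). -/
structure RedSetup (G : BinDag) (k : ℕ) where
  hn : 2 ≤ G.n
  hk : 2 ≤ k
  hdisj : ∀ u c, G.children u = some c → c.1 ≠ c.2
  m : ℕ
  hm : m = 3 * k * G.n + G.n + 1
  l : ℕ
  w : Fin l → Fin G.n
  w_leaf : ∀ t, G.children (w t) = none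
  w_inj : Function.Injective w
  w_surj : ∀ u, G.children u = none → ∃ t, w t = u
  gN : Fin G.n → Fin k → Fin m
  gA : Fin G.n → Bool → Fin k → Fin m
  g_inj : Function.Injective fun x : (Fin G.n × Fin k) ⊕ (Fin G.n × Bool × Fin k) =>
    match x with
    | .inl (u, a) => gN u a
    | .inr (u, s, a) => gA u s a
  g_range_N : ∀ u a, G.n + 1 ≤ (gN u a : ℕ)
  g_range_A : ∀ u s a, G.n + 1 ≤ (gA u s a : ℕ)
  g_root : (gN G.root ⟨0, by omega⟩ : ℕ) = m - 1

namespace RedSetup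

variable {G : BinDag} {k : ℕ}

theorem m_pos (R : RedSetup G k) : 0 < R.m := R.hm ▸ Nat.succ_pos _

theorem lt_m (R : RedSetup G k) {j : ℕ} (h : j ≤ G.n + 1) : j < R.m := by
  have h1 : 2 * 2 ≤ k * G.n := Nat.mul_le_mul R.hk R.hn
  have h2 : R.m = 3 * (k * G.n) + G.n + 1 := by rw [R.hm, Nat.mul_assoc]
  omega

/-- The element with index `j` of `[m]`. -/
def el (R : RedSetup G k) (j : ℕ) (h : j < R.m) : Fin R.m := ⟨j, h⟩

/-- The pairs `(x, y)` that are "used", i.e., appear as the left-hand side of one of the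
explicit defining equations of `T^I`. -/
def Used (R : RedSetup G k) (x y : Fin R.m) : Prop :=
  ((x : ℕ) = 0 ∧ (y : ℕ) < G.n) ∨
  ((x : ℕ) = 0 ∧ (y : ℕ) = G.n) ∨
  ((x : ℕ) = 0 ∧ ∃ (t : ℕ) (ht : t + 1 < R.l) (a : Fin k),
      y = R.gN (R.w ⟨t, by omega⟩) a) ∨
  (∃ (u : Fin G.n) (c : Fin G.n × Fin G.n) (a : Fin k), G.children u = some c ∧
      (x : ℕ) = (u : ℕ) + 1 ∧ (y = R.gN c.1 a ∨ y = R.gN c.2 a)) ∨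
  (∃ (u : Fin G.n) (c : Fin G.n × Fin G.n) (b₁ b₂ : Fin k), G.children u = some c ∧
      x = R.gA u false b₁ ∧ y = R.gA u true b₂)

/-- `T` is the `GEN(m)` instance `T^I` associated to the `DE^G_k` input `I` by the reduction:
`T(1, u) = u + 1` for `u ∈ [n]`; `T(1, n+1) = gN (w 1) (l_{w 1})`;
`T(1, gN (w t) a) = gN (w (t+1)) (l_{w (t+1)})`; for internal `u` with children `(v₁, v₂)`:
`T(u + 1, gN vᵢ a) = gA u side a` and `T(gA u false b₁, gA u true b₂) = gN u (f_u(b₁, b₂))`;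
all unused variables are set to `1`. -/
def Defines (R : RedSetup G k) (I : G.Var k → Fin k) (T : Fin R.m → Fin R.m → Fin R.m) :
    Prop :=
  (∀ u : Fin G.n, T (R.el 0 R.m_pos) (R.el u (R.lt_m (by omega)))
      = R.el ((u : ℕ) + 1) (R.lt_m (by omega))) ∧
  (∀ h0 : 0 < R.l, T (R.el 0 R.m_pos) (R.el G.n (R.lt_m (by omega)))
      = R.gN (R.w ⟨0, h0⟩) (G.val I (R.w ⟨0, h0⟩))) ∧
  (∀ (t : ℕ) (ht : t + 1 < R.l) (a : Fin k),
      T (R.el 0 R.m_pos) (R.gN (R.w ⟨t, by omega⟩) a)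
        = R.gN (R.w ⟨t + 1, ht⟩) (G.val I (R.w ⟨t + 1, ht⟩))) ∧
  (∀ (u : Fin G.n) (c : Fin G.n × Fin G.n) (a : Fin k), G.children u = some c →
      T (R.el ((u : ℕ) + 1) (R.lt_m (by omega))) (R.gN c.1 a) = R.gA u false a ∧
      T (R.el ((u : ℕ) + 1) (R.lt_m (by omega))) (R.gN c.2 a) = R.gA u true a) ∧
  (∀ (u : Fin G.n) (c : Fin G.n × Fin G.n) (b₁ b₂ : Fin k) (h : G.children u = some c),
      T (R.gA u false b₁) (R.gA u true b₂)
        = R.gN u (I (Sum.inr ⟨⟨u, by rw [h]; rfl⟩, (b₁, b₂)⟩))) ∧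
  (∀ x y, ¬ R.Used x y → T x y = R.el 0 R.m_pos)

end RedSetup

namespace BinDag
variable {G : BinDag} {k : ℕ}

theorem val_leaf (I : G.Var k → Fin k) (u : Fin G.n) (h : G.children u = none) :
    G.val I u = I (Sum.inl ⟨u, h⟩) := by
  unfold BinDag.val
  rw [WellFounded.fix_eq]
  split
  · rename_i h'; exact congrArg _ (congrArg _ (Subtype.ext rfl))
  · rename_i c' h'; rw [h] at h'; exact absurd h' (by simp)

theorem val_node (I : G.Var k → Fin k) (u : Fin G.n) (c : Fin G.n × Fin G.n)
    (h : G.children u = some c) :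
    G.val I u = I (Sum.inr ⟨⟨u, by rw [h]; rfl⟩, (G.val I c.1, G.val I c.2)⟩) := by
  conv_lhs => unfold BinDag.val; rw [WellFounded.fix_eq]
  split
  · rename_i h'; rw [h] at h'; exact absurd h' (by simp)
  · rename_i c' h'; rw [h] at h'; cases h'; rfl

end BinDag
namespace RedSetup
variable {G : BinDag} {k : ℕ}

lemma gN_inj (R : RedSetup G k) {u u' : Fin G.n} {a a' : Fin k}
    (h : R.gN u a = R.gN u' a') : u = u' ∧ a = a' := by
  have := R.g_inj (a₁ := Sum.inl (u, a)) (a₂ := Sum.inl (u', a')) h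
  injection this with h2
  exact ⟨congrArg Prod.fst h2, congrArg Prod.snd h2⟩

lemma gA_inj (R : RedSetup G k) {u u' : Fin G.n} {s s' : Bool} {a a' : Fin k}
    (h : R.gA u s a = R.gA u' s' a') : u = u' ∧ s = s' ∧ a = a' := by
  have := R.g_inj (a₁ := Sum.inr (u, s, a)) (a₂ := Sum.inr (u', s', a')) h
  injection this with h2
  refine ⟨congrArg Prod.fst h2, ?_, ?_⟩
  · exact congrArg (fun x => x.2.1) h2
  · exact congrArg (fun x => x.2.2) h2

lemma gN_ne_gA (R : RedSetup G k) (u v : Fin G.n) (a b : Fin k) (s : Bool) :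
    R.gN u a ≠ R.gA v s b := by
  intro h
  have := R.g_inj (a₁ := Sum.inl (u, a)) (a₂ := Sum.inr (v, s, b)) h
  exact absurd this (by simp)

lemma exists_leaf (G : BinDag) (hn : 2 ≤ G.n) : ∃ u, G.children u = none := by
  obtain ⟨u, -, hu⟩ := G.wf.has_min Set.univ ⟨⟨0, by omega⟩, trivial⟩
  refine ⟨u, ?_⟩
  cases h : G.children u with
  | none => rfl
  | some c => exact absurd ⟨c, h, Or.inl rfl⟩ (hu c.1 trivial)

lemma l_pos (R : RedSetup G k) : 0 < R.l := by
  obtain ⟨u, hu⟩ := exists_leaf G R.hn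
  obtain ⟨t, -⟩ := R.w_surj u hu
  exact t.pos

end RedSetup
namespace RedSetup
variable {G : BinDag} {k : ℕ}

/-- Classification of defined `T^I` values. -/
lemma cases_T (R : RedSetup G k) {I : G.Var k → Fin k} {T : Fin R.m × Fin R.m → Fin R.m}
    (hT : R.Defines I (fun x y => T (x, y))) (p : Fin R.m × Fin R.m) :
    (T p : ℕ) ≤ G.n
  ∨ (∃ u, G.children u = none ∧ T p = R.gN u (G.val I u))
  ∨ (∃ u c a, G.children u = some c ∧
       ((p.2 = R.gN c.1 a ∧ T p = R.gA u false a) ∨ (p.2 = R.gN c.2 a ∧ T p = R.gA u true a)))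
  ∨ (∃ (u : Fin G.n) (hu : (G.children u).isSome) (c : Fin G.n × Fin G.n) (b₁ b₂ : Fin k),
       G.children u = some c ∧ p.1 = R.gA u false b₁ ∧ p.2 = R.gA u true b₂ ∧
       T p = R.gN u (I (Sum.inr ⟨⟨u, hu⟩, (b₁, b₂)⟩))) := by
  obtain ⟨h1, h2, h3, h4, h5, h6⟩ := hT
  by_cases hu : R.Used p.1 p.2
  · rcases hu with ⟨hx, hy⟩ | ⟨hx, hy⟩ | ⟨hx, t, ht, a, hy⟩ | ⟨u, c, a, hc, hx, hy⟩ |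
      ⟨u, c, b₁, b₂, hc, hx, hy⟩
    · left
      have hp1 : p.1 = R.el 0 R.m_pos := Fin.ext hx
      have hp2 : p.2 = R.el (⟨(p.2 : ℕ), hy⟩ : Fin G.n) (R.lt_m (by omega)) := Fin.ext rfl
      have := h1 ⟨(p.2 : ℕ), hy⟩
      rw [← hp1, ← hp2] at this
      have : (T p : ℕ) = (p.2 : ℕ) + 1 := congrArg Fin.val this
      omega
    · right; left
      refine ⟨R.w ⟨0, R.l_pos⟩, R.w_leaf _, ?_⟩
      have hp1 : p.1 = R.el 0 R.m_pos := Fin.ext hx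
      have hp2 : p.2 = R.el G.n (R.lt_m (by omega)) := Fin.ext hy
      have := h2 R.l_pos
      rw [← hp1, ← hp2] at this
      exact this
    · right; left
      refine ⟨R.w ⟨t + 1, ht⟩, R.w_leaf _, ?_⟩
      have hp1 : p.1 = R.el 0 R.m_pos := Fin.ext hx
      have := h3 t ht a
      rw [← hp1, ← hy] at this
      exact this
    · right; right; left
      refine ⟨u, c, a, hc, ?_⟩
      have hp1 : p.1 = R.el ((u : ℕ) + 1) (R.lt_m (by omega)) := Fin.ext hx
      rcases hy with hy | hy
      · left
        refine ⟨hy, ?_⟩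
        have := (h4 u c a hc).1
        rw [← hp1, ← hy] at this
        exact this
      · right
        refine ⟨hy, ?_⟩
        have := (h4 u c a hc).2
        rw [← hp1, ← hy] at this
        exact this
    · right; right; right
      refine ⟨u, by rw [hc]; rfl, c, b₁, b₂, hc, hx, hy, ?_⟩
      have := h5 u c b₁ b₂ hc
      rw [← hx, ← hy] at this
      exact this
  · left
    have := h6 p.1 p.2 hu
    have : (T p : ℕ) = 0 := congrArg Fin.val this
    omega

end RedSetup
namespace RedSetup
variable {G : BinDag} {k : ℕ}

lemma gen_of_val (R : RedSetup G k) {I : G.Var k → Fin k} {T : Fin R.m × Fin R.m → Fin R.m}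
    (hT : R.Defines I (fun x y => T (x, y))) :
    ∀ u : Fin G.n, Generated (fun x y => T (x, y)) (R.gN u (G.val I u)) := by
  obtain ⟨h1, h2, h3, h4, h5, h6⟩ := hT
  -- step A : elements of index ≤ n are generated
  have hA : ∀ j : ℕ, ∀ hj : j ≤ G.n, Generated (fun x y => T (x, y)) ⟨j, R.lt_m (by omega)⟩ := by
    intro j
    induction j with
    | zero => intro hj; exact Generated.one R.m_pos
    | succ j ih =>
      intro hj
      show Generated (fun x y => T (x, y))
        (R.el (((⟨j, by omega⟩ : Fin G.n) : ℕ) + 1) (R.lt_m (by omega)))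
      rw [← h1 ⟨j, by omega⟩]
      exact Generated.app (Generated.one R.m_pos) (ih (by omega))
  -- step B : leaves in order
  have hB : ∀ t : ℕ, ∀ ht : t < R.l,
      Generated (fun x y => T (x, y)) (R.gN (R.w ⟨t, ht⟩) (G.val I (R.w ⟨t, ht⟩))) := by
    intro t
    induction t with
    | zero =>
      intro ht
      have := h2 ht
      rw [← this]
      exact Generated.app (Generated.one R.m_pos) (hA G.n le_rfl)
    | succ t ih =>
      intro ht
      have := h3 t ht (G.val I (R.w ⟨t, by omega⟩))
      rw [← this]
      exact Generated.app (Generated.one R.m_pos) (ih (by omega))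
  -- step C : well-founded induction
  intro u
  induction u using G.wf.induction with
  | _ u ih =>
    cases hc : G.children u with
    | none =>
      obtain ⟨t, ht⟩ := R.w_surj u hc
      rw [← ht]
      exact hB t.1 t.2
    | some c =>
      have g1 : Generated (fun x y => T (x, y)) (R.gA u false (G.val I c.1)) := by
        rw [← (h4 u c (G.val I c.1) hc).1]
        exact Generated.app (hA ((u : ℕ) + 1) (by omega)) (ih c.1 ⟨c, hc, Or.inl rfl⟩)
      have g2 : Generated (fun x y => T (x, y)) (R.gA u true (G.val I c.2)) := by
        rw [← (h4 u c (G.val I c.2) hc).2]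
        exact Generated.app (hA ((u : ℕ) + 1) (by omega)) (ih c.2 ⟨c, hc, Or.inr rfl⟩)
      have := h5 u c (G.val I c.1) (G.val I c.2) hc
      rw [← BinDag.val_node I u c hc] at this
      rw [← this]
      exact Generated.app g1 g2

lemma val_of_gen (R : RedSetup G k) {I : G.Var k → Fin k} {T : Fin R.m × Fin R.m → Fin R.m}
    (hT : R.Defines I (fun x y => T (x, y)))
    (hg : Generated (fun x y => T (x, y)) ⟨R.m - 1, Nat.sub_lt R.m_pos one_pos⟩) :
    G.val I G.root = ⟨0, lt_of_lt_of_le two_pos R.hk⟩ := by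
  set S : Fin R.m → Prop := fun z =>
    (z : ℕ) ≤ G.n ∨ (∃ u, z = R.gN u (G.val I u)) ∨
      (∃ u c, G.children u = some c ∧
        (z = R.gA u false (G.val I c.1) ∨ z = R.gA u true (G.val I c.2))) with hS
  have main : ∀ z, Generated (fun x y => T (x, y)) z → S z := by
    intro z hz
    induction hz with
    | one h => left; simp
    | app hx hy ihx ihy =>
      rename_i x y
      rcases R.cases_T hT (x, y)
        with h | ⟨u, hu, h⟩ | ⟨u, c, a, hc, h⟩ | ⟨u, hu, c, b₁, b₂, hc, hx1, hy1, h⟩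
      · left; exact h
      · right; left; exact ⟨u, h⟩
      · -- need a = val of the child, from ihy
        have ha : ∀ v : Fin G.n, (y : Fin R.m) = R.gN v a → a = G.val I v := by
          intro v hv
          rcases ihy with hy' | ⟨u', hy'⟩ | ⟨u', c', hc', hy'⟩
          · exfalso; rw [hv] at hy'; have := R.g_range_N v a; omega
          · rw [hv] at hy'; obtain ⟨e1, e2⟩ := R.gN_inj hy'.symm; rw [← e2, e1]
          · exfalso; rw [hv] at hy'
            rcases hy' with hy' | hy' <;> exact R.gN_ne_gA _ _ _ _ _ hy'
        right; right
        rcases h with ⟨hy1, h⟩ | ⟨hy1, h⟩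
        · have := ha c.1 hy1
          refine ⟨u, c, hc, Or.inl ?_⟩
          rw [h, this]
        · have := ha c.2 hy1
          refine ⟨u, c, hc, Or.inr ?_⟩
          rw [h, this]
      · -- from ihx, ihy get b₁ b₂ are child values
        have hb : ∀ (v : Fin R.m) (s : Bool) (b : Fin k), S v → v = R.gA u s b →
            b = G.val I (if s then c.2 else c.1) := by
          intro v s b hv hvb
          rcases hv with hv | ⟨u', hv⟩ | ⟨u', c', hc', hv⟩
          · exfalso; rw [hvb] at hv; have := R.g_range_A u s b; omega
          · exfalso; rw [hvb] at hv; exact R.gN_ne_gA _ _ _ _ _ hv.symm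
          · rw [hvb] at hv
            rcases hv with hv | hv <;> obtain ⟨e1, e2, e3⟩ := R.gA_inj hv.symm
            · cases e2
              rw [e1] at hc'; rw [hc] at hc'; cases hc'
              simp [← e3]
            · cases e2
              rw [e1] at hc'; rw [hc] at hc'; cases hc'
              simp [← e3]
        have hb1 := hb x false b₁ ihx hx1
        have hb2 := hb y true b₂ ihy hy1
        simp only [if_true, if_false, Bool.false_eq_true] at hb1 hb2
        right; left
        refine ⟨u, ?_⟩
        rw [h, hb1, hb2, ← BinDag.val_node I u c hc]
  have hm1 : S ⟨R.m - 1, Nat.sub_lt R.m_pos one_pos⟩ := main _ hg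
  have hroot : (⟨R.m - 1, Nat.sub_lt R.m_pos one_pos⟩ : Fin R.m)
      = R.gN G.root ⟨0, by have := R.hk; omega⟩ := Fin.ext R.g_root.symm
  have hmn : G.n + 1 ≤ R.m - 1 := by
    have h1 : 2 * 2 ≤ k * G.n := Nat.mul_le_mul R.hk R.hn
    have h2 : R.m = 3 * (k * G.n) + G.n + 1 := by rw [R.hm, Nat.mul_assoc]
    omega
  rcases hm1 with h | ⟨u, h⟩ | ⟨u, c, hc, h⟩
  · exfalso; simp at h; omega
  · rw [hroot] at h
    obtain ⟨e1, e2⟩ := R.gN_inj h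
    rw [e1]
    exact e2.symm
  · exfalso; rw [hroot] at h
    rcases h with h | h <;> exact R.gN_ne_gA _ _ _ _ _ h
end RedSetup
namespace RedSetup
variable {G : BinDag} {k : ℕ}

/-- Class 0: query `(1, n+1)`. -/
def C0 (R : RedSetup G k) (p : Fin R.m × Fin R.m) : Prop :=
  (p.1 : ℕ) = 0 ∧ (p.2 : ℕ) = G.n

/-- Class 1: query `(1, gN (w t) a)` with `t + 1 < l`. -/
def C1 (R : RedSetup G k) (p : Fin R.m × Fin R.m) : Prop :=
  ∃ q : {t : ℕ // t + 1 < R.l} × Fin k,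
    (p.1 : ℕ) = 0 ∧ p.2 = R.gN (R.w ⟨q.1.1, by have := q.1.2; omega⟩) q.2

/-- Class 2: query `(gA u false b₁, gA u true b₂)` for internal `u`. -/
def C2 (R : RedSetup G k) (p : Fin R.m × Fin R.m) : Prop :=
  ∃ q : {u : Fin G.n // (G.children u).isSome} × (Fin k × Fin k),
    p.1 = R.gA q.1.1 false q.2.1 ∧ p.2 = R.gA q.1.1 true q.2.2

open Classical in
/-- The `DE` variable queried by the simulating program at a state querying `p`. -/
noncomputable def rvar (R : RedSetup G k) (d : G.Var k) (p : Fin R.m × Fin R.m) : G.Var k :=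
  if _ : R.C0 p then Sum.inl ⟨R.w ⟨0, R.l_pos⟩, R.w_leaf _⟩
  else if h1 : R.C1 p then Sum.inl ⟨R.w ⟨h1.choose.1.1 + 1, h1.choose.1.2⟩, R.w_leaf _⟩
  else if h2 : R.C2 p then Sum.inr ⟨h2.choose.1, h2.choose.2⟩
  else d

open Classical in
/-- The answer to the `GEN` query `p`, as a function of the answer to the `DE` query. -/
noncomputable def rstep (R : RedSetup G k) (T₀ : Fin R.m × Fin R.m → Fin R.m)
    (p : Fin R.m × Fin R.m) (a : Fin k) : Fin R.m :=
  if _ : R.C0 p then R.gN (R.w ⟨0, R.l_pos⟩) a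
  else if h1 : R.C1 p then R.gN (R.w ⟨h1.choose.1.1 + 1, h1.choose.1.2⟩) a
  else if h2 : R.C2 p then R.gN h2.choose.1.1 a
  else T₀ p

/-- Outside the three classes, the value of `T^I` does not depend on `I`. -/
lemma indep (R : RedSetup G k) {I₀ I : G.Var k → Fin k}
    {T₀ T : Fin R.m × Fin R.m → Fin R.m}
    (hT₀ : R.Defines I₀ (fun x y => T₀ (x, y))) (hT : R.Defines I (fun x y => T (x, y)))
    (p : Fin R.m × Fin R.m) (h0 : ¬ R.C0 p) (h1 : ¬ R.C1 p) (h2 : ¬ R.C2 p) :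
    T p = T₀ p := by
  by_cases hu : R.Used p.1 p.2
  · rcases hu with ⟨hx, hy⟩ | ⟨hx, hy⟩ | ⟨hx, t, ht, a, hy⟩ | ⟨u, c, a, hc, hx, hy⟩ |
      ⟨u, c, b₁, b₂, hc, hx, hy⟩
    · have hp1 : p.1 = R.el 0 R.m_pos := Fin.ext hx
      have hp2 : p.2 = R.el (⟨(p.2 : ℕ), hy⟩ : Fin G.n) (R.lt_m (by omega)) := Fin.ext rfl
      have e1 := hT.1 ⟨(p.2 : ℕ), hy⟩
      have e2 := hT₀.1 ⟨(p.2 : ℕ), hy⟩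
      rw [← hp1, ← hp2] at e1 e2
      exact e1.trans e2.symm
    · exact absurd ⟨hx, hy⟩ h0
    · exact absurd ⟨⟨⟨t, ht⟩, a⟩, hx, hy⟩ h1
    · have hp1 : p.1 = R.el ((u : ℕ) + 1) (R.lt_m (by omega)) := Fin.ext hx
      rcases hy with hy | hy
      · have e1 := (hT.2.2.2.1 u c a hc).1
        have e2 := (hT₀.2.2.2.1 u c a hc).1
        rw [← hp1, ← hy] at e1 e2
        exact e1.trans e2.symm
      · have e1 := (hT.2.2.2.1 u c a hc).2
        have e2 := (hT₀.2.2.2.1 u c a hc).2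
        rw [← hp1, ← hy] at e1 e2
        exact e1.trans e2.symm
    · exact absurd ⟨⟨⟨u, by rw [hc]; rfl⟩, (b₁, b₂)⟩, hx, hy⟩ h2
  · have e1 := hT.2.2.2.2.2 p.1 p.2 hu
    have e2 := hT₀.2.2.2.2.2 p.1 p.2 hu
    exact e1.trans e2.symm

/-- The master simulation identity: `T^I p = rstep p (I (rvar p))`. -/
lemma key (R : RedSetup G k) (d : G.Var k) {I₀ I : G.Var k → Fin k}
    {T₀ T : Fin R.m × Fin R.m → Fin R.m}
    (hT₀ : R.Defines I₀ (fun x y => T₀ (x, y))) (hT : R.Defines I (fun x y => T (x, y)))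
    (p : Fin R.m × Fin R.m) :
    T p = R.rstep T₀ p (I (R.rvar d p)) := by
  unfold rvar rstep
  split_ifs with h0 h1 h2
  · obtain ⟨hx, hy⟩ := h0
    have hp1 : p.1 = R.el 0 R.m_pos := Fin.ext hx
    have hp2 : p.2 = R.el G.n (R.lt_m (by omega)) := Fin.ext hy
    have e := hT.2.1 R.l_pos
    rw [← hp1, ← hp2] at e
    rw [G.val_leaf I _ (R.w_leaf ⟨0, R.l_pos⟩)] at e
    have h0' : R.C0 p := ⟨hx, hy⟩
    refine e.trans (congrArg (R.gN _) (congrArg I ?_))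
    exact Eq.symm (dif_pos h0')
  · obtain ⟨hx, hy⟩ := h1.choose_spec
    have hp1 : p.1 = R.el 0 R.m_pos := Fin.ext hx
    have e := hT.2.2.1 h1.choose.1.1 h1.choose.1.2 h1.choose.2
    rw [← hp1, ← hy] at e
    rw [G.val_leaf I _ (R.w_leaf ⟨h1.choose.1.1 + 1, h1.choose.1.2⟩)] at e
    exact e.trans (congrArg (R.gN _) (congrArg I ((dif_neg h0).trans (dif_pos h1)).symm))
  · obtain ⟨hx, hy⟩ := h2.choose_spec
    obtain ⟨c, hc⟩ := Option.isSome_iff_exists.mp h2.choose.1.2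
    have e := hT.2.2.2.2.1 h2.choose.1.1 c h2.choose.2.1 h2.choose.2.2 hc
    rw [← hx, ← hy] at e
    refine e.trans (congrArg (R.gN _) (congrArg I ?_))
    refine Eq.symm ((dif_neg h0).trans ?_)
    refine (dif_neg h1).trans ?_
    exact dif_pos h2
  · exact R.indep hT₀ hT p h0 h1 h2

/-- Inversion: if `rvar` is an internal-node variable then the pair queried was
`(gA u false b₁, gA u true b₂)`. -/
lemma rvar_inr (R : RedSetup G k) {du : Fin G.n} (hd : G.children du = none)
    {p : Fin R.m × Fin R.m} {u : {u : Fin G.n // (G.children u).isSome}} {b : Fin k × Fin k}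
    (h : R.rvar (Sum.inl ⟨du, hd⟩) p = Sum.inr ⟨u, b⟩) :
    p.1 = R.gA u.1 false b.1 ∧ p.2 = R.gA u.1 true b.2 := by
  unfold rvar at h
  by_cases h0 : R.C0 p
  · have h' := h.symm.trans (dif_pos h0); cases h'
  replace h := (dif_neg h0).symm.trans h
  by_cases h1 : R.C1 p
  · have h' := h.symm.trans (dif_pos h1); cases h'
  replace h := (dif_neg h1).symm.trans h
  by_cases h2 : R.C2 p
  swap
  · have h' := h.symm.trans (dif_neg h2); cases h'
  replace h := (dif_pos h2).symm.trans h
  obtain ⟨hx, hy⟩ := h2.choose_spec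
  injection h with h
  obtain ⟨e1, e2⟩ := Sigma.mk.inj_iff.mp h
  have e2' : h2.choose.2 = b := eq_of_heq e2
  rw [e1] at hx hy
  rw [e2'] at hx hy
  exact ⟨hx, hy⟩

end RedSetup
namespace BP
variable {Var Out : Type} {k : ℕ}

lemma visitsAt_mono (B : BP Var k Out) (I : Var → Fin k) {s t : ℕ} (h : s ≤ t)
    (hv : B.VisitsAt I t) : B.VisitsAt I s :=
  fun s' hs' => hv s' (lt_of_lt_of_le hs' h)

lemma visitsAt_succ (B : BP Var k Out) (I : Var → Fin k) (t : ℕ) :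
    B.VisitsAt I (t + 1) ↔ B.VisitsAt I t ∧ B.out (B.path I t) = none := by
  constructor
  · exact fun h => ⟨B.visitsAt_mono I (Nat.le_succ t) h, h t (Nat.lt_succ_self t)⟩
  · rintro ⟨h1, h2⟩ s hs
    rcases Nat.lt_succ_iff_lt_or_eq.mp hs with hs | hs
    · exact h1 s hs
    · rw [hs]; exact h2

end BP

namespace RedSetup
variable {G : BinDag} {k : ℕ}

/-- The invariant: every edge label of the form `gN u a` has `a` the value of `u`, and every
edge label `gA u s b` has `b` the value of the corresponding child of `u`. -/
lemma edge_inv (R : RedSetup G k) {B : BP (Fin R.m × Fin R.m) R.m Bool} (hinc : SemIncr B)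
    {I : G.Var k → Fin k} {T : Fin R.m × Fin R.m → Fin R.m}
    (hT : R.Defines I (fun x y => T (x, y))) :
    ∀ t, B.VisitsAt T t → B.out (B.path T t) = none →
      (∀ u a, T (B.query (B.path T t)) = R.gN u a → a = G.val I u) ∧
      (∀ u s b c, T (B.query (B.path T t)) = R.gA u s b → G.children u = some c →
        b = G.val I (if s then c.2 else c.1)) := by
  intro t
  induction t using Nat.strong_induction_on with
  | _ t IH =>
    intro hv ho
    set p := B.query (B.path T t) with hp
    -- the earlier-edge-label extraction
    have earlier : ∀ z : Fin R.m, z ∈ ({p.1, p.2} : Set (Fin R.m)) → (z : ℕ) ≠ 0 →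
        (∀ u a, z = R.gN u a → a = G.val I u) ∧
        (∀ u s b c, z = R.gA u s b → G.children u = some c →
          b = G.val I (if s then c.2 else c.1)) := by
      intro z hz hz0
      rcases hinc T t hv ho z hz with h | ⟨s', hs', hes⟩
      · exact absurd h hz0
      · have hv' := B.visitsAt_mono T (le_of_lt hs') hv
        have ho' := hv s' hs'
        obtain ⟨i1, i2⟩ := IH s' hs' hv' ho'
        exact ⟨fun u a ha => i1 u a (by rw [hes, ha]),
          fun u s b c hb hc => i2 u s b c (by rw [hes, hb]) hc⟩
    rcases R.cases_T hT p with h | ⟨u0, hu0, h⟩ | ⟨u0, c0, a0, hc0, h⟩ |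
      ⟨u0, hu0, c0, b1, b2, hc0, hx, hy, h⟩
    · constructor
      · intro u a ha; exfalso; rw [ha] at h; have := R.g_range_N u a; omega
      · intro u s b c hb hc; exfalso; rw [hb] at h; have := R.g_range_A u s b; omega
    · constructor
      · intro u a ha
        obtain ⟨e1, e2⟩ := R.gN_inj (h.symm.trans ha)
        rw [← e1]; exact e2.symm
      · intro u s b c hb hc; exact absurd (h.symm.trans hb) (R.gN_ne_gA _ _ _ _ _)
    · -- case: T p = gA u0 side a0 with p.2 = gN (child) a0
      have key : ∀ (v : Fin G.n) (a : Fin k), p.2 = R.gN v a → a = G.val I v := by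
        intro v a hva
        have hz0 : (p.2 : ℕ) ≠ 0 := by
          rw [hva]; have := R.g_range_N v a; have := R.hn; omega
        exact (earlier p.2 (Set.mem_insert_of_mem _ rfl) hz0).1 v a hva
      rcases h with ⟨hy', hT'⟩ | ⟨hy', hT'⟩
      · constructor
        · intro u a ha; exact absurd (ha.symm.trans hT') (R.gN_ne_gA _ _ _ _ _)
        · intro u s b c hb hc
          obtain ⟨e1, e2, e3⟩ := R.gA_inj (hT'.symm.trans hb)
          cases e2
          rw [e1] at hc0; rw [hc0] at hc; cases hc
          simp only [Bool.false_eq_true, if_false]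
          rw [← e3]
          exact key c0.1 a0 hy'
      · constructor
        · intro u a ha; exact absurd (ha.symm.trans hT') (R.gN_ne_gA _ _ _ _ _)
        · intro u s b c hb hc
          obtain ⟨e1, e2, e3⟩ := R.gA_inj (hT'.symm.trans hb)
          cases e2
          rw [e1] at hc0; rw [hc0] at hc; cases hc
          simp only [if_true]
          rw [← e3]
          exact key c0.2 a0 hy'
    · -- case: T p = gN u0 (I (f_{u0}(b1, b2)))
      have hb1 : b1 = G.val I c0.1 := by
        have hz0 : (p.1 : ℕ) ≠ 0 := by
          rw [hx]; have := R.g_range_A u0 false b1; have := R.hn; omega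
        have := (earlier p.1 (Set.mem_insert _ _) hz0).2 u0 false b1 c0 hx hc0
        simpa using this
      have hb2 : b2 = G.val I c0.2 := by
        have hz0 : (p.2 : ℕ) ≠ 0 := by
          rw [hy]; have := R.g_range_A u0 true b2; have := R.hn; omega
        have := (earlier p.2 (Set.mem_insert_of_mem _ rfl) hz0).2 u0 true b2 c0 hy hc0
        simpa using this
      constructor
      · intro u a ha
        obtain ⟨e1, e2⟩ := R.gN_inj (h.symm.trans ha)
        rw [← e1, ← e2, hb1, hb2, ← BinDag.val_node I u0 c0 hc0]
      · intro u s b c hb hc; exact absurd (h.symm.trans hb) (R.gN_ne_gA _ _ _ _ _)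

end RedSetup

/-- If there is a deterministic semantic-incremental `m`-way branching program of size `s`
computing `GEN(m)` correctly on all instances `T^I` arising from the reduction, then there is
a deterministic thrifty `k`-way branching program of size at most `s` solving `DE^G_k`. -/
theorem stmt15 (G : BinDag) (k : ℕ) (R : RedSetup G k)
    (TT : (G.Var k → Fin k) → (Fin R.m × Fin R.m) → Fin R.m)
    (hTT : ∀ I, R.Defines I (fun x y => TT I (x, y)))
    (B : BP (Fin R.m × Fin R.m) R.m Bool) (hinc : SemIncr B)
    (hB : ∀ I : G.Var k → Fin k, ∃ t b, B.VisitsAt (TT I) t ∧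
      B.out (B.path (TT I) t) = some b ∧
      (b = true ↔ Generated (fun x y => TT I (x, y)) ⟨R.m - 1, Nat.sub_lt R.m_pos one_pos⟩)) :
    ∃ B' : BP (G.Var k) k Bool,
      G.SolvesDE (by have := R.hk; omega) B' ∧ G.Thrifty B' ∧ B'.size ≤ B.size := by
  
  classical
  obtain ⟨du, hdu⟩ := RedSetup.exists_leaf G R.hn
  let I₀ : G.Var k → Fin k := fun _ => ⟨0, by have := R.hk; omega⟩
  let d : G.Var k := Sum.inl ⟨du, hdu⟩
  let B' : BP (G.Var k) k Bool :=
    { State := B.State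
      finState := B.finState
      start := B.start
      query := fun q => if B.out q = none then R.rvar d (B.query q) else d
      next := fun q a => if B.out q = none then B.next q (R.rstep (TT I₀) (B.query q) a) else q
      out := B.out }
  -- one-step agreement at non-output states
  have estep : ∀ (I : G.Var k → Fin k) (q : B.State), B.out q = none →
      B'.next q (I (B'.query q)) = B.next q (TT I (B.query q)) := by
    intro I q hq
    show (if B.out q = none then
        B.next q (R.rstep (TT I₀) (B.query q)
          (I (if B.out q = none then R.rvar d (B.query q) else d))) else q) = _
    rw [if_pos hq, if_pos hq]
    exact congrArg (B.next q) (R.key d (hTT I₀) (hTT I) (B.query q)).symm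
  -- path simulation
  have sim : ∀ (I : G.Var k → Fin k) (t : ℕ),
      (B.VisitsAt (TT I) t → B'.path I t = B.path (TT I) t) ∧
      (B'.VisitsAt I t ↔ B.VisitsAt (TT I) t) := by
    intro I t
    induction t with
    | zero =>
      refine ⟨fun _ => rfl, ?_⟩
      constructor <;> exact fun _ s hs => absurd hs (Nat.not_lt_zero s)
    | succ t ih =>
      have hpe : B.VisitsAt (TT I) (t + 1) → B'.path I (t + 1) = B.path (TT I) (t + 1) := by
        intro hv
        have hv' := B.visitsAt_mono (TT I) (Nat.le_succ t) hv
        have ho := hv t (Nat.lt_succ_self t)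
        show B'.next (B'.path I t) (I (B'.query (B'.path I t)))
          = B.next (B.path (TT I) t) (TT I (B.query (B.path (TT I) t)))
        rw [ih.1 hv']
        exact estep I _ ho
      refine ⟨hpe, ?_⟩
      rw [B'.visitsAt_succ I t, B.visitsAt_succ (TT I) t]
      constructor
      · rintro ⟨h1, h2⟩
        have h1' := ih.2.mp h1
        refine ⟨h1', ?_⟩
        have : B'.out (B'.path I t) = B.out (B.path (TT I) t) := by
          rw [ih.1 h1']
        rw [← this]; exact h2
      · rintro ⟨h1, h2⟩
        have h1' := ih.2.mpr h1
        refine ⟨h1', ?_⟩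
        have : B'.out (B'.path I t) = B.out (B.path (TT I) t) := by
          rw [ih.1 h1]
        rw [this]; exact h2
  refine ⟨B', ?_, ?_, le_of_eq rfl⟩
  · -- solves DE
    intro I
    obtain ⟨t, b, hv, hob, hiff⟩ := hB I
    refine ⟨t, (sim I t).2.mpr hv, ?_⟩
    have hpe := (sim I t).1 hv
    have hiff2 : b = true ↔ G.val I G.root = ⟨0, by have := R.hk; omega⟩ := by
      constructor
      · intro hb; exact R.val_of_gen (hTT I) (hiff.mp hb)
      · intro hval
        apply hiff.mpr
        have : R.gN G.root ⟨0, by have := R.hk; omega⟩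
            = (⟨R.m - 1, Nat.sub_lt R.m_pos one_pos⟩ : Fin R.m) := Fin.ext R.g_root
        rw [← this, ← hval]
        exact R.gen_of_val (hTT I) G.root
    have hdec : b = decide (G.val I G.root = ⟨0, by have := R.hk; omega⟩) := by
      rw [Bool.eq_iff_iff, decide_eq_true_eq]; exact hiff2
    show B'.out (B'.path I t) = _
    rw [hpe]
    show B.out (B.path (TT I) t) = _
    rw [hob, ← hdec]
  · -- thrifty
    intro I q u b hvis hq c hc
    obtain ⟨t, hv', hpt⟩ := hvis
    have hvB := (sim I t).2.mp hv'
    have hpe := (sim I t).1 hvB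
    have hqt : B.path (TT I) t = q := by rw [← hpe, hpt]
    by_cases ho : B.out q = none
    · have hq' : R.rvar d (B.query q) = Sum.inr ⟨u, b⟩ := by
        have : B'.query q = if B.out q = none then R.rvar d (B.query q) else d := rfl
        rw [this, if_pos ho] at hq
        exact hq
      obtain ⟨hx, hy⟩ := R.rvar_inr hdu hq'
      have hoB : B.out (B.path (TT I) t) = none := by rw [hqt]; exact ho
      have earlier : ∀ z : Fin R.m,
          z ∈ ({(B.query (B.path (TT I) t)).1, (B.query (B.path (TT I) t)).2} : Set (Fin R.m)) →
          ∀ (s : Bool) (bb : Fin k), z = R.gA u.1 s bb →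
          bb = G.val I (if s then c.2 else c.1) := by
        intro z hz s bb hzb
        rcases hinc (TT I) t hvB hoB z hz with h | ⟨s', hs', hes⟩
        · exfalso; rw [hzb] at h; have := R.g_range_A u.1 s bb; have := R.hn; omega
        · have hv2 := B.visitsAt_mono (TT I) (le_of_lt hs') hvB
          have ho2 := hvB s' hs'
          exact (R.edge_inv hinc (hTT I) s' hv2 ho2).2 u.1 s bb c (by rw [hes, hzb]) hc
      have hx' : (B.query (B.path (TT I) t)).1 = R.gA u.1 false b.1 := by rw [hqt]; exact hx
      have hy' : (B.query (B.path (TT I) t)).2 = R.gA u.1 true b.2 := by rw [hqt]; exact hy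
      have h1 := earlier _ (Set.mem_insert _ _) false b.1 hx'
      have h2 := earlier _ (Set.mem_insert_of_mem _ rfl) true b.2 hy'
      simp only [Bool.false_eq_true, if_false, if_true] at h1 h2
      exact ⟨h1, h2⟩
    · exfalso
      have : B'.query q = if B.out q = none then R.rvar d (B.query q) else d := rfl
      rw [this, if_neg ho] at hq
      exact absurd hq (by simp [d])
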